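/- Let K be a convex body in ℝ^n (n ≥ 3), H a hyperplane, and p an interior point of K. If for every hyperplane Π through p the section Π ∩ K has an (n−2)-plane of symmetry parallel to H, then K has a hyperplane of symmetry parallel to H. -/
import Mathlib


noncomputable section

open Metric Set MeasureTheory

/-- Euclidean n-space. -/
abbrev Euc (n : ℕ) := EuclideanSpace ℝ (Fin n)

/-- A convex body: compact, convex, with nonempty interior. -/
def IsConvexBody {n : ℕ} (K : Set (Euc n)) : Prop :=
  IsCompact K ∧ Convex ℝ K ∧ (interior K).Nonempty

/-- `f` is the (orthogonal) reflection of the space with fixed-point set the affine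
subspace `A`: an involutive isometry whose fixed points are exactly `A`. -/
def IsReflectionFix {n : ℕ} (f : Euc n → Euc n) (A : AffineSubspace ℝ (Euc n)) : Prop :=
  Isometry f ∧ f ∘ f = id ∧ {x | f x = x} = (A : Set (Euc n))

/-- `A` is a plane of symmetry of the set `K`. -/
def IsSymmetryPlane {n : ℕ} (K : Set (Euc n)) (A : AffineSubspace ℝ (Euc n)) : Prop :=
  ∃ f : Euc n → Euc n, IsReflectionFix f A ∧ f '' K = K

/-- `L` is a plane of symmetry of the set `s` within the flat `P`:
some involutive isometry of the ambient space preserves `P`, has exactly `L` as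
fixed-point set inside `P`, and maps `s` onto itself. -/
def IsSymmPlaneOfIn {n : ℕ} (s : Set (Euc n)) (P L : AffineSubspace ℝ (Euc n)) : Prop :=
  L ≤ P ∧ ∃ f : Euc n → Euc n, Isometry f ∧ f ∘ f = id ∧
    f '' (P : Set (Euc n)) = (P : Set (Euc n)) ∧
    {x ∈ (P : Set (Euc n)) | f x = x} = (L : Set (Euc n)) ∧ f '' s = s

/-- `L` is a plane of symmetry of the section `P ∩ K` within the flat `P`. -/
def IsSectionSymmPlane {n : ℕ} (K : Set (Euc n)) (P L : AffineSubspace ℝ (Euc n)) : Prop :=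
  IsSymmPlaneOfIn ((P : Set (Euc n)) ∩ K) P L

/-- A hyperplane: a nonempty affine subspace whose direction has dimension `n - 1`. -/
def IsHyperplane {n : ℕ} (A : AffineSubspace ℝ (Euc n)) : Prop :=
  (A : Set (Euc n)).Nonempty ∧ Module.finrank ℝ A.direction = n - 1

/-- A rotation about the affine subspace `L`: an affine isometry fixing `L`
pointwise whose linear part has determinant one (orientation preserving). -/
def IsRotationAbout {n : ℕ} (f : Euc n ≃ᵃⁱ[ℝ] Euc n) (L : AffineSubspace ℝ (Euc n)) : Prop :=
  (∀ x ∈ L, f x = x) ∧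
    LinearMap.det (f.linearIsometryEquiv.toLinearEquiv : Euc n →ₗ[ℝ] Euc n) = 1

/-- A body of revolution with axis the line `L`. -/
def IsRevolutionBody {n : ℕ} (K : Set (Euc n)) (L : AffineSubspace ℝ (Euc n)) : Prop :=
  IsConvexBody K ∧ (L : Set (Euc n)).Nonempty ∧ Module.finrank ℝ L.direction = 1 ∧
    ∀ f : Euc n ≃ᵃⁱ[ℝ] Euc n, IsRotationAbout f L → f '' K = K

/-- A `k`-dimensional ellipsoid: affine image of a `k`-dimensional unit ball. -/
def IsEllipsoidOfDim {n : ℕ} (k : ℕ) (s : Set (Euc n)) : Prop :=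
  ∃ (T : Euc n ≃ᵃ[ℝ] Euc n) (V : Submodule ℝ (Euc n)), Module.finrank ℝ V = k ∧
    s = T '' (closedBall 0 1 ∩ (V : Set (Euc n)))

/-- The shadow boundary of `K` with respect to the direction submodule `D`:
the union of the touching sets of all supporting flats of `K` with direction `D`. -/
def shadowBoundary {n : ℕ} (K : Set (Euc n)) (D : Submodule ℝ (Euc n)) : Set (Euc n) :=
  ⋃ l ∈ {l : AffineSubspace ℝ (Euc n) | l.direction = D ∧
      ((l : Set (Euc n)) ∩ K).Nonempty ∧ (l : Set (Euc n)) ∩ interior K = ∅},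
    ((l : Set (Euc n)) ∩ K)

/-- `p` is a Larman point of `K`: every hyperplane section of `K` through `p` has
an `(n-2)`-plane of symmetry. -/
def IsLarmanPoint {n : ℕ} (K : Set (Euc n)) (p : Euc n) : Prop :=
  p ∈ interior K ∧ ∀ P : AffineSubspace ℝ (Euc n), IsHyperplane P → p ∈ P →
    ∃ L : AffineSubspace ℝ (Euc n), Module.finrank ℝ L.direction = n - 2 ∧
      IsSectionSymmPlane K P L

/-- `p` is a revolution point of `K`: every hyperplane section of `K` through `p` has
an `(n-2)`-plane of symmetry containing `p`. -/
def IsRevolutionPoint {n : ℕ} (K : Set (Euc n)) (p : Euc n) : Prop :=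
  p ∈ interior K ∧ ∀ P : AffineSubspace ℝ (Euc n), IsHyperplane P → p ∈ P →
    ∃ L : AffineSubspace ℝ (Euc n), Module.finrank ℝ L.direction = n - 2 ∧ p ∈ L ∧
      IsSectionSymmPlane K P L

open InnerProductSpace

set_option maxHeartbeats 1000000

lemma reflect_formula {n : ℕ} {u : Euc n} (hu : ‖u‖ = 1)
    {P L : AffineSubspace ℝ (Euc n)} {f : Euc n → Euc n}
    (hLP : L ≤ P) {q : Euc n} (hq : q ∈ L)
    (huP : u ∈ P.direction) (huL : ∀ w ∈ L.direction, ⟪u, w⟫_ℝ = 0)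
    (hsum : L.direction ⊔ (ℝ ∙ u) = P.direction)
    (hf : Isometry f) (hff : f ∘ f = id)
    (hfP : f '' (P : Set (Euc n)) = (P : Set (Euc n)))
    (hfix : {x ∈ (P : Set (Euc n)) | f x = x} = (L : Set (Euc n))) :
    ∀ x ∈ P, f x = x - (2 * ⟪x - q, u⟫_ℝ) • u := by
  have hinv : Function.Involutive f := fun x => congrFun hff x
  have hu0 : u ≠ 0 := by intro h; rw [h, norm_zero] at hu; norm_num at hu
  -- f is affine by Mazur-Ulam
  let e : Euc n ≃ᵢ Euc n := ⟨hinv.toPerm f, hf⟩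
  let g := e.toRealAffineIsometryEquiv
  have hg : ∀ x, g x = f x := fun x =>
    congrFun (IsometryEquiv.coeFn_toRealAffineIsometryEquiv e) x
  set A := g.linearIsometryEquiv with hA
  have hmap : ∀ (v : Euc n) (y : Euc n), g (v + y) = A v + g y := by
    intro v y
    have := g.map_vadd y v
    simpa [vadd_eq_add] using this
  -- q is fixed
  have hfixmem : ∀ y, y ∈ (L : Set (Euc n)) → f y = y := by
    intro y hy
    rw [← hfix] at hy
    exact hy.2
  have hfq : f q = q := hfixmem q hq
  have hqP : q ∈ P := hLP hq
  -- A fixes L.direction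
  have hAw : ∀ w ∈ L.direction, A w = w := by
    intro w hw
    have hwq : w + q ∈ L := by
      simpa [vadd_eq_add] using AffineSubspace.vadd_mem_of_mem_direction hw hq
    have hfwq := hfixmem _ hwq
    have h3 := hmap w q
    rw [hg, hg, hfq, hfwq] at h3
    exact add_right_cancel h3.symm
  -- elements of P.direction orthogonal to L.direction are multiples of u
  have ray : ∀ v ∈ P.direction, (∀ w ∈ L.direction, ⟪v, w⟫_ℝ = 0) → ∃ r : ℝ, v = r • u := by
    intro v hv hvL
    rw [← hsum] at hv
    obtain ⟨w, hw, m, hm, hwm⟩ := Submodule.mem_sup.1 hv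
    obtain ⟨r, rfl⟩ := Submodule.mem_span_singleton.1 hm
    have h1 : ⟪v, w⟫_ℝ = 0 := hvL w hw
    have h2 : ⟪u, w⟫_ℝ = 0 := huL w hw
    have h3 : ⟪w + r • u, w⟫_ℝ = ‖w‖ ^ 2 + r * ⟪u, w⟫_ℝ := by
      rw [inner_add_left, real_inner_smul_left, real_inner_self_eq_norm_sq]
    rw [hwm] at h3
    rw [h1, h2] at h3
    have hw0 : w = 0 := by
      have : ‖w‖ ^ 2 = 0 := by linarith
      simpa using this
    exact ⟨r, by rw [← hwm, hw0, zero_add]⟩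
  -- A u = -u
  have hAu : A u = -u := by
    have huqP : u + q ∈ P := by
      simpa [vadd_eq_add] using AffineSubspace.vadd_mem_of_mem_direction huP hqP
    have hfuq : f (u + q) ∈ (P : Set (Euc n)) := by
      rw [← hfP]; exact ⟨u + q, huqP, rfl⟩
    have hAuval : f (u + q) = A u + q := by
      have h3 := hmap u q
      rw [hg, hg, hfq] at h3
      exact h3
    have hAuP : A u ∈ P.direction := by
      have := AffineSubspace.vsub_mem_direction (hAuval ▸ hfuq) hqP
      simpa [vsub_eq_sub] using this
    have hAuL : ∀ w ∈ L.direction, ⟪A u, w⟫_ℝ = 0 := by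
      intro w hw
      have : ⟪A u, A w⟫_ℝ = ⟪u, w⟫_ℝ := A.inner_map_map u w
      rw [hAw w hw] at this
      rw [this]; exact huL w hw
    obtain ⟨r, hr⟩ := ray (A u) hAuP hAuL
    have hnr : ‖A u‖ = 1 := by rw [A.norm_map]; exact hu
    have : |r| = 1 := by
      rw [hr, norm_smul, hu, mul_one, Real.norm_eq_abs] at hnr; exact hnr
    rcases abs_eq (by norm_num : (0:ℝ) ≤ 1) |>.1 this with h1 | h1
    · exfalso
      have hfixuq : f (u + q) = u + q := by rw [hAuval, hr, h1, one_smul]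
      have : u + q ∈ (L : Set (Euc n)) := by
        rw [← hfix]; exact ⟨huqP, hfixuq⟩
      have hudir : u ∈ L.direction := by
        have := AffineSubspace.vsub_mem_direction this hq
        simpa [vsub_eq_sub] using this
      have := huL u hudir
      rw [real_inner_self_eq_norm_sq, hu] at this
      norm_num at this
    · rw [hr, h1, neg_one_smul]
  -- main formula
  intro x hx
  have hxq : x - q ∈ P.direction := by
    have := AffineSubspace.vsub_mem_direction hx hqP
    simpa [vsub_eq_sub] using this
  rw [← hsum] at hxq
  obtain ⟨w, hw, m, hm, hwm⟩ := Submodule.mem_sup.1 hxq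
  obtain ⟨s, rfl⟩ := Submodule.mem_span_singleton.1 hm
  have hs : ⟪x - q, u⟫_ℝ = s := by
    rw [← hwm, inner_add_left, real_inner_smul_left, real_inner_self_eq_norm_sq, hu]
    have : ⟪w, u⟫_ℝ = 0 := by rw [real_inner_comm]; exact huL w hw
    rw [this]; ring
  have hxval : x = (w + s • u) + q := by rw [hwm]; abel
  have hfx : f x = A (w + s • u) + q := by
    have h3 := hmap (w + s • u) q
    rw [hg, hg, hfq, ← hxval] at h3
    exact h3
  rw [hfx, map_add, _root_.map_smul, hAw w hw, hAu, hs, hxval]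
  module


/-- If every hyperplane section of `K` through the interior point `p`
has an `(n-2)`-plane of symmetry parallel to `H`, then `K` has a hyperplane of
symmetry parallel to `H`. -/
theorem stmt0 {n : ℕ} (hn : 3 ≤ n) (K : Set (Euc n)) (hK : IsConvexBody K)
    (H : AffineSubspace ℝ (Euc n)) (hH : IsHyperplane H)
    (p : Euc n) (hp : p ∈ interior K)
    (hsec : ∀ P : AffineSubspace ℝ (Euc n), IsHyperplane P → p ∈ P →
      ∃ L : AffineSubspace ℝ (Euc n), Module.finrank ℝ L.direction = n - 2 ∧
        L.direction ≤ H.direction ∧ IsSectionSymmPlane K P L) :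
    ∃ H' : AffineSubspace ℝ (Euc n), IsHyperplane H' ∧ H'.direction = H.direction ∧
      IsSymmetryPlane K H' := by
  classical
  obtain ⟨hKc, hKconv, -⟩ := hK
  have hfinEuc : Module.finrank ℝ (Euc n) = n := finrank_euclideanSpace_fin
  -- unit normal to H
  have hHne : H.direction ≠ ⊤ := by
    intro h
    have h2 := hH.2
    rw [h, finrank_top, hfinEuc] at h2
    omega
  have hHo : H.directionᗮ ≠ ⊥ := fun h => hHne (Submodule.orthogonal_eq_bot_iff.1 h)
  obtain ⟨u₀, hu₀mem, hu₀⟩ := (Submodule.ne_bot_iff _).1 hHo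
  set u : Euc n := ‖u₀‖⁻¹ • u₀ with hudef
  have hu : ‖u‖ = 1 := by
    rw [hudef, norm_smul, norm_inv, norm_norm, inv_mul_cancel₀ (norm_ne_zero_iff.2 hu₀)]
  have hu0 : u ≠ 0 := by intro h; rw [h, norm_zero] at hu; norm_num at hu
  have huH : ∀ w ∈ H.direction, ⟪u, w⟫_ℝ = 0 := by
    intro w hw
    have h1 : ⟪w, u₀⟫_ℝ = 0 := (Submodule.mem_orthogonal _ _).1 hu₀mem w hw
    rw [hudef, real_inner_smul_left, real_inner_comm, h1, mul_zero]
  -- chord parameter sets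
  set T : Euc n → Set ℝ := fun x => {t : ℝ | x + t • u ∈ K} with hT
  obtain ⟨R, hR⟩ := isBounded_iff_forall_norm_le.1 hKc.isBounded
  have hbdd : ∀ x : Euc n, BddAbove (T x) ∧ BddBelow (T x) := by
    intro x
    have hsub : ∀ t ∈ T x, |t| ≤ R + ‖x‖ := by
      intro t ht
      have hmemK : x + t • u ∈ K := ht
      have h1 : ‖x + t • u‖ ≤ R := hR (x + t • u) hmemK
      have h2 : ‖t • u‖ ≤ ‖x + t • u‖ + ‖x‖ := by
        have h3 := norm_sub_le (x + t • u) x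
        rwa [add_sub_cancel_left] at h3
      rw [norm_smul, hu, mul_one, Real.norm_eq_abs] at h2
      linarith
    constructor
    · exact ⟨R + ‖x‖, fun t ht => (abs_le.1 (hsub t ht)).2⟩
    · exact ⟨-(R + ‖x‖), fun t ht => (abs_le.1 (hsub t ht)).1⟩
  have hpK : p ∈ K := interior_subset hp
  -- key: all chords parallel to u have midpoints at the same height
  have key : ∀ x ∈ K, sInf (T x) + sSup (T x) + 2 * ⟪x, u⟫_ℝ
      = sInf (T p) + sSup (T p) + 2 * ⟪p, u⟫_ℝ := by
    intro x hxK
    -- hyperplane P through p and x with u in its direction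
    set W : Submodule ℝ (Euc n) := (ℝ ∙ u) ⊔ (ℝ ∙ (x - p)) with hW
    have hWrank : Module.finrank ℝ W ≤ 2 := by
      have h1 := Submodule.finrank_sup_add_finrank_inf_eq (ℝ ∙ u) (ℝ ∙ (x - p))
      rw [← hW] at h1
      have h2 : Module.finrank ℝ (ℝ ∙ u) = 1 := finrank_span_singleton hu0
      have h3 : Module.finrank ℝ (ℝ ∙ (x - p)) ≤ 1 := by
        simpa using finrank_span_le_card ({x - p} : Set (Euc n))
      omega
    have hWne : W ≠ ⊤ := by
      intro h
      rw [h, finrank_top, hfinEuc] at hWrank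
      omega
    have hWo : Wᗮ ≠ ⊥ := fun h => hWne (Submodule.orthogonal_eq_bot_iff.1 h)
    obtain ⟨z, hzW, hz0⟩ := (Submodule.ne_bot_iff _).1 hWo
    set P := AffineSubspace.mk' p (ℝ ∙ z)ᗮ with hPdef
    have hPdir : P.direction = (ℝ ∙ z)ᗮ := AffineSubspace.direction_mk' p _
    have hzu : ⟪z, u⟫_ℝ = 0 := by
      have := (Submodule.mem_orthogonal _ _).1 hzW u
        (Submodule.mem_sup_left (Submodule.mem_span_singleton_self u))
      rw [real_inner_comm]; exact this
    have hzxp : ⟪z, x - p⟫_ℝ = 0 := by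
      have := (Submodule.mem_orthogonal _ _).1 hzW (x - p)
        (Submodule.mem_sup_right (Submodule.mem_span_singleton_self _))
      rw [real_inner_comm]; exact this
    have huPd : u ∈ P.direction := by
      rw [hPdir, Submodule.mem_orthogonal_singleton_iff_inner_right]
      exact hzu
    have hpP : p ∈ P := AffineSubspace.self_mem_mk' p _
    have hxP : x ∈ P := by
      rw [hPdef, AffineSubspace.mem_mk',
        Submodule.mem_orthogonal_singleton_iff_inner_right]
      exact hzxp
    have hPhyp : IsHyperplane P := by
      refine ⟨⟨p, hpP⟩, ?_⟩
      rw [hPdir]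
      have h1 := Submodule.finrank_add_finrank_orthogonal (ℝ ∙ z)
      rw [finrank_span_singleton hz0, hfinEuc] at h1
      omega
    obtain ⟨L, hLrank, hLH, hLP, f, hf, hff, hfP, hfix, hfK⟩ := hsec P hPhyp hpP
    have hLne : (L : Set (Euc n)).Nonempty := by
      rw [AffineSubspace.nonempty_iff_ne_bot]
      intro h
      rw [h, AffineSubspace.direction_bot, finrank_bot] at hLrank
      omega
    obtain ⟨q, hq⟩ := hLne
    have huL : ∀ w ∈ L.direction, ⟪u, w⟫_ℝ = 0 := fun w hw => huH w (hLH hw)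
    have hsum : L.direction ⊔ (ℝ ∙ u) = P.direction := by
      have hle : L.direction ⊔ (ℝ ∙ u) ≤ P.direction :=
        sup_le (AffineSubspace.direction_le hLP)
          ((Submodule.span_singleton_le_iff_mem _ _).2 huPd)
      have hinf : L.direction ⊓ (ℝ ∙ u) = ⊥ := by
        rw [eq_bot_iff]
        intro v hv
        obtain ⟨hv1, hv2⟩ := Submodule.mem_inf.1 hv
        obtain ⟨r, rfl⟩ := Submodule.mem_span_singleton.1 hv2
        have h1 := huL _ hv1
        rw [real_inner_smul_right, real_inner_self_eq_norm_sq, hu] at h1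
        have hr : r = 0 := by nlinarith
        simp [hr]
      apply Submodule.eq_of_le_of_finrank_eq hle
      have h1 := Submodule.finrank_sup_add_finrank_inf_eq L.direction (ℝ ∙ u)
      rw [hinf, finrank_bot, hLrank, finrank_span_singleton hu0] at h1
      rw [hPhyp.2]
      omega
    have formula := reflect_formula hu hLP hq huPd huL hsum hf hff hfP hfix
    have chord : ∀ y, y ∈ P → (T y).Nonempty →
        sInf (T y) + sSup (T y) = 2 * (⟪q, u⟫_ℝ - ⟪y, u⟫_ℝ) := by
      intro y hyP hyne
      set d : ℝ := ⟪q, u⟫_ℝ - ⟪y, u⟫_ℝ with hd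
      have hmapT : ∀ t ∈ T y, 2 * d - t ∈ T y := by
        intro t ht
        have hyt : y + t • u ∈ P := by
          have h2 := AffineSubspace.vadd_mem_of_mem_direction
            (Submodule.smul_mem _ t huPd) hyP
          simpa [vadd_eq_add, add_comm] using h2
        have hytK : y + t • u ∈ (P : Set (Euc n)) ∩ K := ⟨hyt, ht⟩
        have hmem : f (y + t • u) ∈ (P : Set (Euc n)) ∩ K := by
          rw [← hfK]; exact ⟨_, hytK, rfl⟩
        have hform := formula _ hyt
        have hinner : ⟪y + t • u - q, u⟫_ℝ = (⟪y, u⟫_ℝ - ⟪q, u⟫_ℝ) + t := by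
          rw [inner_sub_left, inner_add_left, real_inner_smul_left,
            real_inner_self_eq_norm_sq, hu]
          ring
        rw [hform, hinner] at hmem
        have heq : y + t • u - (2 * ((⟪y, u⟫_ℝ - ⟪q, u⟫_ℝ) + t)) • u
            = y + (2 * d - t) • u := by
          rw [hd]; module
        rw [heq] at hmem
        exact hmem.2
      obtain ⟨hA, hB⟩ := hbdd y
      have h1 : sSup (T y) ≤ 2 * d - sInf (T y) := by
        apply csSup_le hyne
        intro t ht
        have := csInf_le hB (hmapT t ht)
        linarith
      have h2 : 2 * d - sSup (T y) ≤ sInf (T y) := by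
        apply le_csInf hyne
        intro t ht
        have := le_csSup hA (hmapT t ht)
        linarith
      linarith
    have hTx : (T x).Nonempty := ⟨0, by simpa [hT] using hxK⟩
    have hTp : (T p).Nonempty := ⟨0, by simpa [hT] using hpK⟩
    have e1 := chord x hxP hTx
    have e2 := chord p hpP hTp
    linarith
  -- the reflection
  set c : ℝ := (sInf (T p) + sSup (T p)) / 2 + ⟪p, u⟫_ℝ with hc
  set f₀ : Euc n → Euc n := fun x => x + (2 * (c - ⟪x, u⟫_ℝ)) • u with hf₀
  have hinnerf₀ : ∀ x, ⟪f₀ x, u⟫_ℝ = 2 * c - ⟪x, u⟫_ℝ := by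
    intro x
    simp only [hf₀]
    rw [inner_add_left, real_inner_smul_left, real_inner_self_eq_norm_sq, hu]
    ring
  have hinvol : ∀ x, f₀ (f₀ x) = x := by
    intro x
    have h1 := hinnerf₀ x
    simp only [hf₀] at h1 ⊢
    rw [h1]
    module
  have hiso : Isometry f₀ := by
    apply Isometry.of_dist_eq
    intro a b
    rw [dist_eq_norm, dist_eq_norm]
    have hab : f₀ a - f₀ b = (a - b) - (2 * ⟪a - b, u⟫_ℝ) • u := by
      simp only [hf₀]
      rw [inner_sub_left]
      module
    rw [hab]
    have hsq : ‖(a - b) - (2 * ⟪a - b, u⟫_ℝ) • u‖ ^ 2 = ‖a - b‖ ^ 2 := by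
      rw [norm_sub_sq_real, real_inner_smul_right, norm_smul, Real.norm_eq_abs, hu,
        mul_one, sq_abs]
      ring
    have := congrArg Real.sqrt hsq
    rwa [Real.sqrt_sq (norm_nonneg _), Real.sqrt_sq (norm_nonneg _)] at this
  set H' := AffineSubspace.mk' (c • u) (ℝ ∙ u)ᗮ with hH'def
  have hH'set : (H' : Set (Euc n)) = {x | ⟪x, u⟫_ℝ = c} := by
    ext x
    rw [hH'def, SetLike.mem_coe, AffineSubspace.mem_mk',
      Submodule.mem_orthogonal_singleton_iff_inner_right]
    have h1 : (⟪u, x -ᵥ c • u⟫_ℝ) = ⟪u, x⟫_ℝ - c := by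
      rw [vsub_eq_sub, inner_sub_right, real_inner_smul_right,
        real_inner_self_eq_norm_sq, hu]
      ring
    rw [mem_setOf_eq, h1, real_inner_comm]
    constructor
    · intro h; linarith
    · intro h; linarith
  have hfix0 : {x | f₀ x = x} = (H' : Set (Euc n)) := by
    rw [hH'set]
    ext x
    simp only [hf₀, mem_setOf_eq]
    constructor
    · intro h
      have h2 : (2 * (c - ⟪x, u⟫_ℝ)) • u = 0 := by
        have := add_left_cancel (a := x) (by rw [h, add_zero] : x + (2 * (c - ⟪x, u⟫_ℝ)) • u = x + 0)
        exact this
      rcases smul_eq_zero.1 h2 with h' | h'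
      · linarith [h']
      · exact absurd h' hu0
    · intro h
      rw [h]
      simp
  have hdirH' : H'.direction = H.direction := by
    rw [hH'def, AffineSubspace.direction_mk']
    symm
    apply Submodule.eq_of_le_of_finrank_eq
    · intro w hw
      rw [Submodule.mem_orthogonal_singleton_iff_inner_right]
      exact huH w hw
    · rw [hH.2]
      have h1 := Submodule.finrank_add_finrank_orthogonal (ℝ ∙ u)
      rw [finrank_span_singleton hu0, hfinEuc] at h1
      omega
  have hH'hyp : IsHyperplane H' := by
    refine ⟨⟨c • u, AffineSubspace.self_mem_mk' _ _⟩, ?_⟩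
    rw [hdirH', hH.2]
  have himg : f₀ '' K ⊆ K := by
    rintro - ⟨x, hxK, rfl⟩
    have hTx : (T x).Nonempty := ⟨0, by simpa [hT] using hxK⟩
    have hclosed : IsClosed (T x) := by
      have h2 : T x = (fun t : ℝ => x + t • u) ⁻¹' K := rfl
      rw [h2]
      exact IsClosed.preimage (by continuity) hKc.isClosed
    have haT : sInf (T x) ∈ T x := hclosed.csInf_mem hTx (hbdd x).2
    have hbT : sSup (T x) ∈ T x := hclosed.csSup_mem hTx (hbdd x).1
    have h0T : (0 : ℝ) ∈ T x := by simpa [hT] using hxK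
    have ha0 : sInf (T x) ≤ 0 := csInf_le (hbdd x).2 h0T
    have hb0 : (0 : ℝ) ≤ sSup (T x) := le_csSup (hbdd x).1 h0T
    have hab : sInf (T x) + sSup (T x) = 2 * (c - ⟪x, u⟫_ℝ) := by
      have h1 := key x hxK
      have h2 : 2 * c = sInf (T p) + sSup (T p) + 2 * ⟪p, u⟫_ℝ := by rw [hc]; ring
      linarith
    have hconv : Convex ℝ (T x) := by
      intro t1 h1 t2 h2 α β hα hβ hαβ
      have hmem1 : x + t1 • u ∈ K := h1
      have hmem2 : x + t2 • u ∈ K := h2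
      have hcomb := hKconv hmem1 hmem2 hα hβ hαβ
      have heq : α • (x + t1 • u) + β • (x + t2 • u)
          = (α + β) • x + (α * t1 + β * t2) • u := by module
      rw [heq, hαβ, one_smul] at hcomb
      show x + (α • t1 + β • t2) • u ∈ K
      simpa [smul_eq_mul] using hcomb
    have hmid : sInf (T x) + sSup (T x) ∈ T x := by
      apply hconv.ordConnected.out haT hbT
      constructor <;> linarith
    have hfx : f₀ x = x + (sInf (T x) + sSup (T x)) • u := by
      simp only [hf₀]
      rw [hab]
    rw [hfx]
    exact hmid
  have himg' : f₀ '' K = K := by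
    apply Subset.antisymm himg
    intro x hx
    exact ⟨f₀ x, himg ⟨x, hx, rfl⟩, hinvol x⟩
  exact ⟨H', hH'hyp, hdirH', f₀, ⟨hiso, funext hinvol, hfix0⟩, himg'⟩
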